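/- Let x=0 be an equilibrium of the Riemann–Liouville system, with ν∈(0,1], and let P∈ℝ^{n×n} be a symmetric positive definite matrix. If zᵀ·P·f(t,z) ≤ 0 for all t∈(hℕ)_{a+(1−ν)h} and all z∈ℝⁿ, then the equilibrium x=0 of the Riemann–Liouville system is stable. -/

import Mathlib

open Finset Filter Matrix

/-- The `h`-factorial function `t_h^(ν) = h^ν Γ(t/h+1)/Γ(t/h+1-ν)`. -/
noncomputable def hfact (h t ν : ℝ) : ℝ :=
  h ^ ν * Real.Gamma (t / h + 1) / Real.Gamma (t / h + 1 - ν)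

/-- The forward `h`-difference operator. -/
noncomputable def fdiff (h : ℝ) (y : ℝ → ℝ) (t : ℝ) : ℝ := (y (t + h) - y t) / h

/-- The fractional `h`-sum of order `μ > 0` of `y : (hℕ)_a → ℝ`, evaluated at the
grid point `t = a + μh + k·h` of `(hℕ)_{a+μh}`. -/
noncomputable def hSum (h a μ : ℝ) (y : ℝ → ℝ) (k : ℕ) : ℝ :=
  (h / Real.Gamma μ) *
    ∑ j ∈ Finset.range (k + 1),
      hfact h (a + μ * h + (k : ℝ) * h - (a + (j : ℝ) * h + h)) (μ - 1) * y (a + (j : ℝ) * h)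

/-- The Riemann–Liouville-like `h`-difference of order `ν ∈ (0,1]` of `y : (hℕ)_a → ℝ`,
evaluated at the grid point `t = a + (1-ν)h + k·h` of `(hℕ)_{a+(1-ν)h}`:
for `ν ∈ (0,1)` it is `Δ_h` applied to the `(1-ν)`-fractional `h`-sum. -/
noncomputable def rlD (h a ν : ℝ) (y : ℝ → ℝ) (k : ℕ) : ℝ :=
  if ν = 1 then fdiff h y (a + (k : ℝ) * h)
  else (hSum h a (1 - ν) y (k + 1) - hSum h a (1 - ν) y k) / h

/-- `x : (hℕ)_a → ℝⁿ` is a solution of the Riemann–Liouville system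
`(_aΔ_h^ν x)(t) = f(t, x(t+νh))` on `(hℕ)_{a+(1-ν)h}` (componentwise). -/
def IsRLSol {n : ℕ} (h a ν : ℝ) (f : ℝ → (Fin n → ℝ) → (Fin n → ℝ))
    (x : ℝ → Fin n → ℝ) : Prop :=
  ∀ (k : ℕ) (i : Fin n),
    rlD h a ν (fun t => x t i) k
      = f (a + (1 - ν) * h + (k : ℝ) * h) (x (a + ((k : ℝ) + 1) * h)) i

section Aux

noncomputable def pN {n : ℕ} (P : Matrix (Fin n) (Fin n) ℝ) (z : Fin n → ℝ) : ℝ :=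
  Real.sqrt (z ⬝ᵥ P.mulVec z)

variable {n : ℕ} {P : Matrix (Fin n) (Fin n) ℝ}

lemma qf_nonneg (hP : P.PosDef) (z : Fin n → ℝ) : 0 ≤ z ⬝ᵥ P.mulVec z := by
  have := hP.posSemidef.dotProduct_mulVec_nonneg z; simpa using this

lemma bilin_symm (hPsym : P.IsSymm) (u v : Fin n → ℝ) :
    v ⬝ᵥ P.mulVec u = u ⬝ᵥ P.mulVec v := by
  rw [Matrix.dotProduct_mulVec, ← Matrix.mulVec_transpose, hPsym.eq, dotProduct_comm]

lemma sq_pN (hP : P.PosDef) (z : Fin n → ℝ) : (pN P z) ^ 2 = z ⬝ᵥ P.mulVec z := by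
  rw [pN, Real.sq_sqrt (qf_nonneg hP z)]

lemma pN_nonneg (z : Fin n → ℝ) : 0 ≤ pN P z := Real.sqrt_nonneg _

lemma pN_zero : pN P (0 : Fin n → ℝ) = 0 := by simp [pN]

lemma cauchy (hP : P.PosDef) (hPsym : P.IsSymm) (u v : Fin n → ℝ) :
    u ⬝ᵥ P.mulVec v ≤ pN P u * pN P v := by
  set Qu := u ⬝ᵥ P.mulVec u with hQu
  set Qv := v ⬝ᵥ P.mulVec v with hQv
  set B := u ⬝ᵥ P.mulVec v with hB
  have key : ∀ t : ℝ, 0 ≤ Qu * (t * t) + (2 * B) * t + Qv := by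
    intro t
    have h0 := qf_nonneg hP (t • u + v)
    have hexp : (t • u + v) ⬝ᵥ P.mulVec (t • u + v)
        = Qu * (t * t) + (2 * B) * t + Qv := by
      simp only [Matrix.mulVec_add, Matrix.mulVec_smul, dotProduct_add, add_dotProduct,
        smul_dotProduct, dotProduct_smul, smul_eq_mul, hQu, hQv, hB]
      rw [bilin_symm hPsym u v]
      ring
    linarith [hexp ▸ h0]
  have hdisc := discrim_le_zero key
  rw [discrim] at hdisc
  have hBsq : B ^ 2 ≤ Qu * Qv := by nlinarith
  calc B ≤ Real.sqrt (B ^ 2) := by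
        rw [Real.sqrt_sq_eq_abs]; exact le_abs_self B
    _ ≤ Real.sqrt (Qu * Qv) := Real.sqrt_le_sqrt hBsq
    _ = pN P u * pN P v := by rw [Real.sqrt_mul (qf_nonneg hP u), pN, pN]

lemma pN_add_le (hP : P.PosDef) (hPsym : P.IsSymm) (u v : Fin n → ℝ) :
    pN P (u + v) ≤ pN P u + pN P v := by
  have hexp : (u + v) ⬝ᵥ P.mulVec (u + v)
      = u ⬝ᵥ P.mulVec u + 2 * (u ⬝ᵥ P.mulVec v) + v ⬝ᵥ P.mulVec v := by
    simp only [Matrix.mulVec_add, dotProduct_add, add_dotProduct]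
    rw [bilin_symm hPsym u v]; ring
  have h1 : (u + v) ⬝ᵥ P.mulVec (u + v) ≤ (pN P u + pN P v) ^ 2 := by
    have := cauchy hP hPsym u v
    rw [hexp]
    nlinarith [sq_pN hP u, sq_pN hP v]
  calc pN P (u + v) = Real.sqrt ((u + v) ⬝ᵥ P.mulVec (u + v)) := rfl
    _ ≤ Real.sqrt ((pN P u + pN P v) ^ 2) := Real.sqrt_le_sqrt h1
    _ = pN P u + pN P v := by
        rw [Real.sqrt_sq (add_nonneg (pN_nonneg _) (pN_nonneg _))]

lemma qf_smul (c : ℝ) (z : Fin n → ℝ) :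
    (c • z) ⬝ᵥ P.mulVec (c • z) = c ^ 2 * (z ⬝ᵥ P.mulVec z) := by
  simp only [Matrix.mulVec_smul, smul_dotProduct, dotProduct_smul, smul_eq_mul]
  ring

lemma pN_smul (c : ℝ) (hc : 0 ≤ c) (z : Fin n → ℝ) : pN P (c • z) = c * pN P z := by
  rw [pN, qf_smul, Real.sqrt_mul (sq_nonneg c), Real.sqrt_sq hc, pN]

lemma pN_sum_le (hP : P.PosDef) (hPsym : P.IsSymm) {ι : Type*} (s : Finset ι)
    (g : ι → Fin n → ℝ) : pN P (∑ j ∈ s, g j) ≤ ∑ j ∈ s, pN P (g j) := by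
  classical
  induction s using Finset.induction_on with
  | empty => simp [pN_zero]
  | insert _ _ hx ih =>
      rw [Finset.sum_insert hx, Finset.sum_insert hx]
      exact le_trans (pN_add_le hP hPsym _ _) (by linarith)

lemma qf_expand (hPsym : P.IsSymm) (u v : Fin n → ℝ) (c : ℝ) :
    (u + c • v) ⬝ᵥ P.mulVec (u + c • v)
      = u ⬝ᵥ P.mulVec u + 2 * c * (u ⬝ᵥ P.mulVec v) + c ^ 2 * (v ⬝ᵥ P.mulVec v) := by
  simp only [Matrix.mulVec_add, Matrix.mulVec_smul, dotProduct_add, add_dotProduct,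
    smul_dotProduct, dotProduct_smul, smul_eq_mul]
  rw [bilin_symm hPsym u v]; ring

lemma key_step (hP : P.PosDef) (hPsym : P.IsSymm) {x1 u F : Fin n → ℝ} {c : ℝ}
    (heq : x1 = u + c • F) (hB : c * (x1 ⬝ᵥ P.mulVec F) ≤ 0) :
    pN P x1 ≤ pN P u := by
  have hu : u = x1 + (-c) • F := by
    funext i
    have := congrFun heq i
    simp only [Pi.add_apply, Pi.smul_apply, smul_eq_mul, neg_smul, Pi.neg_apply] at this ⊢
    linarith
  have hQu : u ⬝ᵥ P.mulVec u
      = x1 ⬝ᵥ P.mulVec x1 - 2 * c * (x1 ⬝ᵥ P.mulVec F) + c ^ 2 * (F ⬝ᵥ P.mulVec F) := by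
    rw [hu, qf_expand hPsym]; ring
  have hQF := qf_nonneg hP F
  have : x1 ⬝ᵥ P.mulVec x1 ≤ u ⬝ᵥ P.mulVec u := by nlinarith
  exact Real.sqrt_le_sqrt this

end Aux


noncomputable def wgt (μ : ℝ) (m : ℕ) : ℝ :=
  Real.Gamma ((m : ℝ) + μ) / (Real.Gamma μ * Real.Gamma ((m : ℝ) + 1))

lemma wgt_pos {μ : ℝ} (hμ : 0 < μ) (m : ℕ) : 0 < wgt μ m := by
  have h1 : (0:ℝ) < (m:ℝ) + μ := by positivity
  have h2 : (0:ℝ) < (m:ℝ) + 1 := by positivity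
  exact div_pos (Real.Gamma_pos_of_pos h1)
    (mul_pos (Real.Gamma_pos_of_pos hμ) (Real.Gamma_pos_of_pos h2))

lemma wgt_zero {μ : ℝ} (hμ : 0 < μ) : wgt μ 0 = 1 := by
  simp only [wgt, Nat.cast_zero, zero_add, Real.Gamma_one, mul_one]
  exact div_self (Real.Gamma_pos_of_pos hμ).ne'

lemma wgt_succ_le {μ : ℝ} (hμ : 0 < μ) (hμ1 : μ ≤ 1) (m : ℕ) :
    wgt μ (m + 1) ≤ wgt μ m := by
  have h1 : ((m:ℝ) + μ) ≠ 0 := by positivity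
  have h2 : ((m:ℝ) + 1) ≠ 0 := by positivity
  have e1 : Real.Gamma ((↑(m+1):ℝ) + μ) = ((m:ℝ) + μ) * Real.Gamma ((m:ℝ) + μ) := by
    have := Real.Gamma_add_one h1
    rw [← this]; congr 1; push_cast; ring
  have e2 : Real.Gamma ((↑(m+1):ℝ) + 1) = ((m:ℝ) + 1) * Real.Gamma ((m:ℝ) + 1) := by
    have := Real.Gamma_add_one h2
    rw [← this]; congr 1; push_cast; ring
  have hΓμ := Real.Gamma_pos_of_pos hμ
  have hΓ1 := Real.Gamma_pos_of_pos (show (0:ℝ) < (m:ℝ) + 1 by positivity)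
  have hΓ2 := Real.Gamma_pos_of_pos (show (0:ℝ) < (m:ℝ) + μ by positivity)
  have hw : wgt μ (m + 1) = wgt μ m * (((m:ℝ) + μ) / ((m:ℝ) + 1)) := by
    rw [wgt, wgt, e1, e2]; field_simp
  have hfac : ((m:ℝ) + μ) / ((m:ℝ) + 1) ≤ 1 := by
    rw [div_le_one (by positivity)]; linarith
  rw [hw]
  have := mul_le_of_le_one_right (wgt_pos hμ m).le hfac
  linarith

lemma hSum_eq {h a μ : ℝ} (hh : 0 < h) (hμ : 0 < μ) (y : ℝ → ℝ) (k : ℕ) :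
    hSum h a μ y k
      = h ^ μ * ∑ j ∈ Finset.range (k + 1), wgt μ (k - j) * y (a + (j : ℝ) * h) := by
  rw [hSum, Finset.mul_sum, Finset.mul_sum]
  refine Finset.sum_congr rfl fun j hj => ?_
  have hjk : j ≤ k := Nat.lt_succ_iff.mp (Finset.mem_range.mp hj)
  have hcast : ((k - j : ℕ) : ℝ) = (k : ℝ) - (j : ℝ) := Nat.cast_sub hjk
  have harg : (a + μ * h + (k : ℝ) * h - (a + (j : ℝ) * h + h)) / h
      = ((k - j : ℕ) : ℝ) + μ - 1 := by
    rw [hcast]; field_simp; ring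
  have hΓμ := Real.Gamma_pos_of_pos hμ
  rw [hfact, harg]
  have e2 : ((k - j : ℕ) : ℝ) + μ - 1 + 1 - (μ - 1) = ((k - j : ℕ) : ℝ) + 1 := by ring
  have e1 : ((k - j : ℕ) : ℝ) + μ - 1 + 1 = ((k - j : ℕ) : ℝ) + μ := by ring
  rw [e2, e1]
  rw [wgt, Real.rpow_sub hh, Real.rpow_one]
  have hΓ1 := Real.Gamma_pos_of_pos (show (0:ℝ) < ((k - j : ℕ) : ℝ) + 1 by positivity)
  have hne : h ≠ 0 := hh.ne'
  set Y := y (a + (j:ℝ) * h)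
  set G1 := Real.Gamma (((k - j : ℕ):ℝ) + μ)
  set G2 := Real.Gamma (((k - j : ℕ):ℝ) + 1)
  field_simp

lemma rec_formula {h a ν : ℝ} (hh : 0 < h) (hν1 : ν < 1)
    (y : ℝ → ℝ) (F : ℝ) (k : ℕ)
    (heq : (hSum h a (1 - ν) y (k + 1) - hSum h a (1 - ν) y k) / h = F) :
    y (a + ((k : ℝ) + 1) * h)
      = (∑ j ∈ Finset.range (k + 1),
          (wgt (1 - ν) (k - j) - wgt (1 - ν) (k - j + 1)) * y (a + (j : ℝ) * h))
        + h ^ ν * F := by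
  have hμ : 0 < 1 - ν := by linarith
  set μ := 1 - ν with hμdef
  rw [hSum_eq hh hμ, hSum_eq hh hμ] at heq
  rw [Finset.sum_range_succ] at heq
  have hidx : ∀ j ∈ Finset.range (k + 1),
      wgt μ (k + 1 - j) * y (a + (j : ℝ) * h)
        = wgt μ (k - j + 1) * y (a + (j : ℝ) * h) := by
    intro j hj
    have hjk : j ≤ k := Nat.lt_succ_iff.mp (Finset.mem_range.mp hj)
    rw [Nat.succ_sub hjk]
  rw [Finset.sum_congr rfl hidx] at heq
  rw [Nat.sub_self, wgt_zero hμ, one_mul] at heq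
  set A := ∑ j ∈ Finset.range (k + 1), wgt μ (k - j + 1) * y (a + (j : ℝ) * h) with hA
  set B := ∑ j ∈ Finset.range (k + 1), wgt μ (k - j) * y (a + (j : ℝ) * h) with hB
  set Y := y (a + (↑(k + 1) : ℝ) * h) with hY
  have hYe : y (a + ((k : ℝ) + 1) * h) = Y := by rw [hY]; push_cast; ring_nf
  have hsum : (∑ j ∈ Finset.range (k + 1),
      (wgt μ (k - j) - wgt μ (k - j + 1)) * y (a + (j : ℝ) * h)) = B - A := by
    rw [hA, hB, ← Finset.sum_sub_distrib]
    exact Finset.sum_congr rfl fun j _ => by ring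
  rw [hYe, hsum]
  have hc : (0:ℝ) < h ^ μ := Real.rpow_pos_of_pos hh μ
  have hνpow : h ^ ν = h / h ^ μ := by
    refine eq_div_of_mul_eq hc.ne' ?_
    rw [← Real.rpow_add hh, hμdef]
    norm_num
  have heq2 : h ^ μ * (A + Y) - h ^ μ * B = h * F := by
    field_simp at heq
    linarith
  rw [hνpow]
  field_simp
  linarith [heq2]

theorem stmt10 {n : ℕ} (hn : 1 ≤ n) (h a ν : ℝ) (hh : 0 < h) (hν0 : 0 < ν) (hν1 : ν ≤ 1)
    (f : ℝ → (Fin n → ℝ) → (Fin n → ℝ))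
    (hf0 : ∀ k : ℕ, f (a + (1 - ν) * h + (k : ℝ) * h) 0 = 0)
    (P : Matrix (Fin n) (Fin n) ℝ) (hPsym : P.IsSymm) (hP : P.PosDef)
    (hle : ∀ (k : ℕ) (z : Fin n → ℝ),
      z ⬝ᵥ P.mulVec (f (a + (1 - ν) * h + (k : ℝ) * h) z) ≤ 0) :
    (∀ ε > (0 : ℝ), ∃ δ > (0 : ℝ), ∀ x : ℝ → Fin n → ℝ,
      IsRLSol h a ν f x → ‖x a‖ < δ → ∀ k : ℕ, ‖x (a + (k : ℝ) * h)‖ < ε) := by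
  haveI : Nonempty (Fin n) := ⟨⟨0, hn⟩⟩
  -- continuity of the quadratic form
  have hQc : Continuous fun z : Fin n → ℝ => z ⬝ᵥ P.mulVec z := by
    simp only [dotProduct, Matrix.mulVec]
    exact continuous_finset_sum _ fun i _ => (continuous_apply i).mul
      (continuous_finset_sum _ fun j _ => (continuous_const.mul (continuous_apply j)))
  -- min and max of the quadratic form on the unit sphere
  have hsne : (Metric.sphere (0 : Fin n → ℝ) 1).Nonempty :=
    NormedSpace.sphere_nonempty.mpr zero_le_one
  obtain ⟨zm, hzm, hmin'⟩ := (isCompact_sphere (0 : Fin n → ℝ) 1).exists_isMinOn hsne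
    hQc.continuousOn
  obtain ⟨zM, hzM, hmax'⟩ := (isCompact_sphere (0 : Fin n → ℝ) 1).exists_isMaxOn hsne
    hQc.continuousOn
  have hmin := isMinOn_iff.mp hmin'
  have hmax := isMaxOn_iff.mp hmax'
  set c1 := zm ⬝ᵥ P.mulVec zm with hc1def
  set c2 := zM ⬝ᵥ P.mulVec zM with hc2def
  have hzmne : zm ≠ 0 := by
    have h1 : ‖zm‖ = 1 := mem_sphere_zero_iff_norm.mp hzm
    intro hz; rw [hz, norm_zero] at h1; norm_num at h1
  have hc1 : 0 < c1 := by
    have := hP.dotProduct_mulVec_pos hzmne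
    simpa using this
  have hc12 : c1 ≤ c2 := hmin zM hzM
  have hc2 : 0 < c2 := lt_of_lt_of_le hc1 hc12
  -- two-sided bound for the quadratic form
  have hbound : ∀ z : Fin n → ℝ,
      c1 * ‖z‖ ^ 2 ≤ z ⬝ᵥ P.mulVec z ∧ z ⬝ᵥ P.mulVec z ≤ c2 * ‖z‖ ^ 2 := by
    intro z
    by_cases hz : z = 0
    · subst hz; simp
    · have hr : 0 < ‖z‖ := norm_pos_iff.mpr hz
      set w : Fin n → ℝ := ‖z‖⁻¹ • z with hwdef
      have hw : w ∈ Metric.sphere (0 : Fin n → ℝ) 1 := by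
        rw [mem_sphere_zero_iff_norm, hwdef, norm_smul, norm_inv, norm_norm,
          inv_mul_cancel₀ hr.ne']
      have hzw : z = ‖z‖ • w := by
        rw [hwdef, smul_smul, mul_inv_cancel₀ hr.ne', one_smul]
      have hQz : z ⬝ᵥ P.mulVec z = ‖z‖ ^ 2 * (w ⬝ᵥ P.mulVec w) := by
        conv_lhs => rw [hzw]
        exact qf_smul _ _
      constructor
      · rw [hQz]
        have := hmin w hw
        nlinarith
      · rw [hQz]
        have := hmax w hw
        nlinarith
  intro ε hε
  refine ⟨Real.sqrt (c1 / c2) * ε,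
    mul_pos (Real.sqrt_pos.mpr (div_pos hc1 hc2)) hε, ?_⟩
  intro x hsol hxa k
  set δ := Real.sqrt (c1 / c2) * ε with hδdef
  set X : ℕ → Fin n → ℝ := fun m => x (a + (m : ℝ) * h) with hXdef
  have hX : ∀ m : ℕ, X m = x (a + (m : ℝ) * h) := fun m => by rw [hXdef]
  have hXc : ∀ m : ℕ, x (a + ((m : ℝ) + 1) * h) = X (m + 1) := by
    intro m; rw [hX]; congr 1; push_cast; ring
  have hX0 : X 0 = x a := by rw [hX]; norm_num
  -- the central monotonicity claim
  have claim : ∀ k, ∀ j, j ≤ k → pN P (X j) ≤ pN P (X 0) := by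
    intro k
    induction k with
    | zero =>
        intro j hj
        have : j = 0 := Nat.le_zero.mp hj
        subst this; exact le_refl _
    | succ k ih =>
        intro j hj
        rcases eq_or_lt_of_le hj with rfl | hlt
        · -- main step : j = k + 1
          set F := f (a + (1 - ν) * h + (k : ℝ) * h) (X (k + 1)) with hFdef
          have hB : X (k + 1) ⬝ᵥ P.mulVec F ≤ 0 := hle k (X (k + 1))
          by_cases hνeq : ν = 1
          · -- ν = 1 : explicit Euler-type step
            have hstep : X (k + 1) = X k + h • F := by
              funext i
              have hk := hsol k i
              simp only [rlD, hνeq, if_true, fdiff] at hk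
              rw [hνeq] at hFdef
              have e : a + (k : ℝ) * h + h = a + ((k : ℝ) + 1) * h := by ring
              rw [e, hXc k, ← hX k, ← hFdef] at hk
              simp only [Pi.add_apply, Pi.smul_apply, smul_eq_mul]
              field_simp at hk
              linarith
            have h1 : pN P (X (k + 1)) ≤ pN P (X k) :=
              key_step hP hPsym hstep (mul_nonpos_of_nonneg_of_nonpos hh.le hB)
            exact le_trans h1 (ih k le_rfl)
          · -- ν < 1 : fractional step
            have hνlt : ν < 1 := lt_of_le_of_ne hν1 hνeq
            have hμ : 0 < 1 - ν := by linarith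
            have hμ1 : 1 - ν ≤ 1 := by linarith
            set aco : ℕ → ℝ := fun m => wgt (1 - ν) m - wgt (1 - ν) (m + 1) with hacodef
            have haco : ∀ m, 0 ≤ aco m := fun m =>
              sub_nonneg.mpr (wgt_succ_le hμ hμ1 m)
            set U := ∑ j ∈ Finset.range (k + 1), aco (k - j) • X j with hUdef
            have hstep : X (k + 1) = U + h ^ ν • F := by
              funext i
              have hk := hsol k i
              simp only [rlD, if_neg hνeq] at hk
              rw [hXc k] at hk
              have hrec := rec_formula hh hνlt (fun t => x t i) (F i) k (by
                rw [hFdef]; exact hk)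
              rw [hUdef]
              simp only [Pi.add_apply, Pi.smul_apply, smul_eq_mul, Finset.sum_apply]
              beta_reduce at hrec
              rw [hXc k] at hrec
              rw [hrec]
            have h1 : pN P (X (k + 1)) ≤ pN P U :=
              key_step hP hPsym hstep
                (mul_nonpos_of_nonneg_of_nonpos (Real.rpow_nonneg hh.le ν) hB)
            have h2 : pN P U ≤ ∑ j ∈ Finset.range (k + 1), aco (k - j) * pN P (X j) := by
              refine le_trans (pN_sum_le hP hPsym _ _) (le_of_eq ?_)
              exact Finset.sum_congr rfl fun j _ => pN_smul _ (haco _) _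
            have h3 : ∑ j ∈ Finset.range (k + 1), aco (k - j) * pN P (X j)
                ≤ ∑ j ∈ Finset.range (k + 1), aco (k - j) * pN P (X 0) := by
              refine Finset.sum_le_sum fun j hj => ?_
              exact mul_le_mul_of_nonneg_left
                (ih j (Nat.lt_succ_iff.mp (Finset.mem_range.mp hj))) (haco _)
            have h4 : ∑ j ∈ Finset.range (k + 1), aco (k - j) ≤ 1 := by
              have hrefl : ∑ j ∈ Finset.range (k + 1), aco (k - j)
                  = ∑ j ∈ Finset.range (k + 1), aco j := by
                simpa using Finset.sum_range_reflect aco (k + 1)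
              rw [hrefl]
              have htel : ∑ j ∈ Finset.range (k + 1), aco j
                  = wgt (1 - ν) 0 - wgt (1 - ν) (k + 1) :=
                Finset.sum_range_sub' (wgt (1 - ν)) (k + 1)
              rw [htel, wgt_zero hμ]
              linarith [wgt_pos hμ (k + 1)]
            have h5 : ∑ j ∈ Finset.range (k + 1), aco (k - j) * pN P (X 0)
                ≤ pN P (X 0) := by
              rw [← Finset.sum_mul]
              nlinarith [pN_nonneg (P := P) (X 0),
                Finset.sum_nonneg fun j (_ : j ∈ Finset.range (k+1)) => haco (k - j)]
            linarith
        · exact ih j (Nat.lt_succ_iff.mp hlt)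
  -- conclusion via the two-sided bound
  have hmono := claim k k le_rfl
  have hQle : X k ⬝ᵥ P.mulVec (X k) ≤ X 0 ⬝ᵥ P.mulVec (X 0) := by
    rw [← sq_pN hP, ← sq_pN hP]
    exact pow_le_pow_left₀ (pN_nonneg _) hmono 2
  have hδsq : c2 * δ ^ 2 = c1 * ε ^ 2 := by
    rw [hδdef, mul_pow, Real.sq_sqrt (div_pos hc1 hc2).le]
    field_simp
  have hlt : c1 * ‖X k‖ ^ 2 < c1 * ε ^ 2 := by
    have b1 := (hbound (X k)).1
    have b2 := (hbound (X 0)).2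
    have hxa' : ‖X 0‖ < δ := by rw [hX0]; exact hxa
    have : c2 * ‖X 0‖ ^ 2 < c2 * δ ^ 2 := by
      have := pow_lt_pow_left₀ hxa' (norm_nonneg _) two_ne_zero
      nlinarith
    linarith [hδsq ▸ this]
  have hnk : ‖X k‖ ^ 2 < ε ^ 2 := by
    have := (mul_lt_mul_iff_right₀ hc1).mp hlt
    exact this
  have : ‖X k‖ < ε := by nlinarith [norm_nonneg (X k)]
  rw [hX k] at this
  exact this
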